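/- Let μ > 0 and σ > 0, and let Y be a standard normal random variable. Then the law of R := (μ + σ·Y)/(μ − σ·Y), i.e. the pushforward of the standard Gaussian measure on ℝ under the map y ↦ (μ + σ·y)/(μ − σ·y), is absolutely continuous with respect to Lebesgue measure with density f_R(x) = √(2/π)·(μ/σ)·exp(−(1/2)·((μ/σ)·(x−1)/(x+1))²)/(x+1)², where f_R(−1) := 0. -/

import Mathlib

open Real MeasureTheory Set

/-- The standard Gaussian measure on `ℝ`, with density `(2π)^(−1/2) exp(−y²/2)`
with respect to Lebesgue measure. -/
noncomputable def stdGaussian : Measure ℝ :=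
  volume.withDensity fun y => ENNReal.ofReal ((2 * π) ^ (-(1 / 2) : ℝ) * Real.exp (-y ^ 2 / 2))

theorem quotient_density_perfect_anticorrelation_symmetric
    (μ σ : ℝ) (hμ : 0 < μ) (hσ : 0 < σ) :
    Measure.map (fun y : ℝ => (μ + σ * y) / (μ - σ * y)) stdGaussian =
      volume.withDensity fun x : ℝ => ENNReal.ofReal
        (if x = -1 then 0 else
          Real.sqrt (2 / π) * (μ / σ) *
            Real.exp (-(1 / 2) * ((μ / σ) * (x - 1) / (x + 1)) ^ 2) / (x + 1) ^ 2) := by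
  have hσ' : σ ≠ 0 := hσ.ne'
  have hμ' : μ ≠ 0 := hμ.ne'
  set R : ℝ → ℝ := fun y => (μ + σ * y) / (μ - σ * y) with hRdef
  set g : ℝ → ℝ := fun x => μ / σ * (x - 1) / (x + 1) with hgdef
  have hmR : Measurable R := by
    apply Measurable.div <;> fun_prop
  -- key algebraic identities
  have hRg : ∀ x : ℝ, x ≠ -1 → R (g x) = x := by
    intro x hx
    have hx1 : x + 1 ≠ 0 := fun h => hx (by linarith)
    have hden : μ - σ * g x = 2 * μ / (x + 1) := by
      simp only [hgdef]; field_simp; ring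
    have hnum : μ + σ * g x = 2 * μ * x / (x + 1) := by
      simp only [hgdef]; field_simp; ring
    simp only [hRdef, hden, hnum]
    rw [div_div_div_eq]
    have h2μ : (2:ℝ) * μ ≠ 0 := by positivity
    field_simp
  have hgR : ∀ y : ℝ, y ≠ μ / σ → g (R y) = y := by
    intro y hy
    have hden : μ - σ * y ≠ 0 := by
      intro h; apply hy; field_simp; linarith
    have h1 : R y + 1 = 2 * μ / (μ - σ * y) := by
      simp only [hRdef]; field_simp; ring
    have h2 : R y - 1 = 2 * σ * y / (μ - σ * y) := by
      simp only [hRdef]; field_simp; ring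
    simp only [hgdef, h1, h2]
    field_simp
  have hRne : ∀ y : ℝ, y ≠ μ / σ → R y ≠ -1 := by
    intro y hy h
    have hden : μ - σ * y ≠ 0 := by
      intro h'; apply hy; field_simp; linarith
    have h1 : R y + 1 = 2 * μ / (μ - σ * y) := by
      simp only [hRdef]; field_simp; ring
    rw [h, neg_add_cancel] at h1
    exact (div_ne_zero (by positivity) hden) h1.symm
  have hgne : ∀ x : ℝ, x ≠ -1 → g x ≠ μ / σ := by
    intro x hx h
    have hx1 : x + 1 ≠ 0 := fun h' => hx (by linarith)
    simp only [hgdef] at h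
    rw [div_eq_div_iff hx1 hσ'] at h
    · rw [mul_right_comm, div_mul_cancel₀ μ hσ'] at h
      linarith
  ext A hA
  rw [Measure.map_apply hmR hA, stdGaussian, withDensity_apply _ (hmR hA),
    withDensity_apply _ hA]
  have hsing : (volume : Measure ℝ) {μ / σ} = 0 := measure_singleton _
  have hsing' : (volume : Measure ℝ) {(-1 : ℝ)} = 0 := measure_singleton _
  -- restrict both sides away from the singular points
  rw [setLIntegral_congr ((diff_null_ae_eq_self hsing).symm : (R ⁻¹' A : Set ℝ) =ᵐ[volume] _),
    setLIntegral_congr ((diff_null_ae_eq_self hsing').symm : (A : Set ℝ) =ᵐ[volume] _)]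
  -- rewrite the preimage set as an image under g
  have himg : R ⁻¹' A \ {μ / σ} = g '' (A \ {-1}) := by
    ext y
    simp only [mem_diff, mem_preimage, mem_singleton_iff, mem_image]
    constructor
    · rintro ⟨hyA, hy⟩
      exact ⟨R y, ⟨hyA, hRne y hy⟩, hgR y hy⟩
    · rintro ⟨x, ⟨hxA, hx⟩, rfl⟩
      exact ⟨by rw [hRg x hx]; exact hxA, hgne x hx⟩
  rw [himg]
  -- change of variables
  have hsm : MeasurableSet (A \ {(-1 : ℝ)}) := hA.diff (measurableSet_singleton _)
  have hderiv : ∀ x ∈ A \ {(-1 : ℝ)}, HasFDerivWithinAt g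
      ((1 : ℝ →L[ℝ] ℝ).smulRight (μ / σ * (2 / (x + 1) ^ 2))) (A \ {(-1 : ℝ)}) x := by
    intro x hx
    have hx1 : x + 1 ≠ 0 := by
      intro h; exact hx.2 (by simp; linarith)
    have h1 : HasDerivAt (fun x : ℝ => μ / σ * (x - 1) / (x + 1))
        (μ / σ * (2 / (x + 1) ^ 2)) x := by
      have hnum : HasDerivAt (fun x : ℝ => μ / σ * (x - 1)) (μ / σ) x := by
        simpa using (((hasDerivAt_id x).sub_const 1).const_mul (μ / σ))
      have hden : HasDerivAt (fun x : ℝ => x + 1) 1 x := by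
        simpa using (hasDerivAt_id x).add_const 1
      have := hnum.div hden hx1
      refine this.congr_deriv ?_
      ring
    exact (h1.hasDerivWithinAt).hasFDerivWithinAt
  have hinj : InjOn g (A \ {(-1 : ℝ)}) := by
    intro a ha b hb hab
    have ha1 : a ≠ -1 := ha.2
    have hb1 : b ≠ -1 := hb.2
    have := congrArg R hab
    rwa [hRg a ha1, hRg b hb1] at this
  rw [MeasureTheory.lintegral_image_eq_lintegral_abs_det_fderiv_mul volume hsm hderiv hinj]
  -- now equality of integrands pointwise on A \ {-1}
  apply setLIntegral_congr_fun hsm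
  intro x hx
  beta_reduce
  have hx1 : x + 1 ≠ 0 := by
    intro h; exact hx.2 (by simp; linarith)
  have hxne : x ≠ -1 := hx.2
  rw [ContinuousLinearMap.smulRight_one_eq_toSpanSingleton, ContinuousLinearMap.det_toSpanSingleton, if_neg hxne, ← ENNReal.ofReal_mul (abs_nonneg _)]
  congr 1
  have habs : |μ / σ * (2 / (x + 1) ^ 2)| = μ / σ * (2 / (x + 1) ^ 2) := by
    apply abs_of_pos; positivity
  rw [habs]
  have hgx : g x = μ / σ * (x - 1) / (x + 1) := rfl
  rw [hgx]
  have hexp : -(μ / σ * (x - 1) / (x + 1)) ^ 2 / 2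
      = -(1 / 2) * (μ / σ * (x - 1) / (x + 1)) ^ 2 := by ring
  rw [hexp]
  have hc : (2 * π) ^ (-(1 / 2) : ℝ) = (Real.sqrt (2 * π))⁻¹ := by
    rw [Real.rpow_neg (by positivity), ← Real.sqrt_eq_rpow]
  rw [hc]
  have h2 : Real.sqrt (2 / π) = 2 / Real.sqrt (2 * π) := by
    rw [eq_div_iff (by positivity : Real.sqrt (2 * π) ≠ 0), ← Real.sqrt_mul (by positivity)]
    rw [show 2 / π * (2 * π) = 2 ^ 2 by field_simp]
    exact Real.sqrt_sq (by norm_num)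
  rw [h2]
  have hπ : (0:ℝ) < Real.sqrt (2 * π) := by positivity
  field_simp
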